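/- Let B ≥ 1 and let (p,q) ∈ Rat_B be arbitrary. For t ∈ [0,1] define p_t = e^{−iπt} ( cos(πt)·p + i sin(πt)·q ) and q_t = e^{−iπt} ( i sin(πt)·p + cos(πt)·q ). Then each (p_t, q_t) is a pair of monic degree-B polynomials lying in Rat_B, (p_0,q_0) = (p_1,q_1) = (p,q), and Res(p_t, q_t) = e^{−2πiBt}·Res(p,q) for all t; in particular, along this loop (which represents a 2π isorotation of the corresponding rational map) the resultant winds exactly −B times around 0. -/

import Mathlib

open Polynomial Complex
open scoped Real

/-- The resultant `Res(p,q) = ∏_{i,j} (z_i - p_j)` of two monic polynomials, written as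
`∏_i q(z_i)` over the roots `z_i` of `p` (with multiplicity). -/
noncomputable def res (p q : Polynomial ℂ) : ℂ :=
  (p.roots.map fun z => q.eval z).prod

/-- `p_t = e^{-iπt} ( cos(πt)·p + i sin(πt)·q )`: numerator of the 2π isorotation loop. -/
noncomputable def isoNum (p q : Polynomial ℂ) (t : ℝ) : Polynomial ℂ :=
  C (exp (-(I * π * t))) *
    (C (Real.cos (π * t) : ℂ) * p + C (I * Real.sin (π * t)) * q)

/-- `q_t = e^{-iπt} ( i sin(πt)·p + cos(πt)·q )`: denominator of the 2π isorotation loop. -/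
noncomputable def isoDen (p q : Polynomial ℂ) (t : ℝ) : Polynomial ℂ :=
  C (exp (-(I * π * t))) *
    (C (I * Real.sin (π * t)) * p + C (Real.cos (π * t) : ℂ) * q)

lemma multiset_prod_swap {α β M : Type*} [CommMonoid M] (s : Multiset α) (t : Multiset β)
    (f : α → β → M) :
    (s.map fun a => (t.map fun b => f a b).prod).prod
      = (t.map fun b => (s.map fun a => f a b).prod).prod := by
  induction s using Multiset.induction with
  | empty => simp
  | cons a s ih => simp [Multiset.prod_map_mul, ih]

lemma card_roots_of_monic {p : Polynomial ℂ} (hp : p.Monic) :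
    Multiset.card p.roots = p.natDegree :=
  Polynomial.splits_iff_card_roots.mp (IsAlgClosed.splits p)

lemma res_congr_mul {p Q R : Polynomial ℂ} {c : ℂ}
    (h : ∀ z ∈ p.roots, Q.eval z = c * R.eval z) :
    res p Q = c ^ (Multiset.card p.roots) * res p R := by
  unfold res
  rw [Multiset.map_congr rfl h, Multiset.prod_map_mul]
  congr 1
  simp [Multiset.map_const', Multiset.prod_replicate]

lemma res_swap {p q : Polynomial ℂ} (hp : p.Monic) (hq : q.Monic) :
    res p q = (-1) ^ (p.natDegree * q.natDegree) * res q p := by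
  have hpc := card_roots_of_monic hp
  have hqc := card_roots_of_monic hq
  have hpe : ∀ z : ℂ, p.eval z = (p.roots.map fun w => z - w).prod := by
    intro z
    conv_lhs => rw [← prod_multiset_X_sub_C_of_monic_of_roots_card_eq hp hpc]
    rw [eval_multiset_prod, Multiset.map_map]
    simp
  have hqe : ∀ z : ℂ, q.eval z = (q.roots.map fun w => z - w).prod := by
    intro z
    conv_lhs => rw [← prod_multiset_X_sub_C_of_monic_of_roots_card_eq hq hqc]
    rw [eval_multiset_prod, Multiset.map_map]
    simp
  unfold res
  rw [Multiset.map_congr rfl fun z _ => hqe z,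
    multiset_prod_swap,
    Multiset.map_congr rfl fun w _ => hpe w]
  rw [Multiset.map_congr (f := fun b => (Multiset.map (fun a => a - b) p.roots).prod)
    (g := fun b => (-1 :ℂ) ^ p.natDegree * (Multiset.map (fun a => b - a) p.roots).prod) rfl ?_]
  · rw [Multiset.prod_map_mul]
    congr 1
    rw [Multiset.map_const', Multiset.prod_replicate, hqc, ← pow_mul]
  · intro b _
    show (Multiset.map (fun a => a - b) p.roots).prod = _
    rw [Multiset.map_congr (f := fun a => a - b) (g := fun a => (-1:ℂ) * (b - a)) rfl
        (fun a _ => by ring),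
      Multiset.prod_map_mul, Multiset.map_const', Multiset.prod_replicate, hpc]

lemma comb_monic (B : ℕ) (a b : ℂ) (hab : a + b = 1) (p q : Polynomial ℂ)
    (hpm : p.Monic) (hpd : p.natDegree = B) (hqm : q.Monic) (hqd : q.natDegree = B) :
    (C a * p + C b * q).Monic ∧ (C a * p + C b * q).natDegree = B := by
  have hpc : p.coeff B = 1 := by rw [← hpd]; exact hpm.coeff_natDegree
  have hqc : q.coeff B = 1 := by rw [← hqd]; exact hqm.coeff_natDegree
  have hc : (C a * p + C b * q).coeff B = 1 := by
    rw [coeff_add, coeff_C_mul, coeff_C_mul, hpc, hqc, mul_one, mul_one, hab]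
  have hd : (C a * p + C b * q).natDegree ≤ B :=
    le_trans (natDegree_add_le _ _)
      (max_le (le_trans (natDegree_C_mul_le _ _) hpd.le)
        (le_trans (natDegree_C_mul_le _ _) hqd.le))
  have hm := monic_of_natDegree_le_of_coeff_eq_one B hd hc
  exact ⟨hm, le_antisymm hd (le_natDegree_of_ne_zero (hc ▸ one_ne_zero))⟩

lemma res_comb (B : ℕ) (a b : ℂ) (hab : a + b = 1) (p q : Polynomial ℂ)
    (hpm : p.Monic) (hpd : p.natDegree = B) (hqm : q.Monic) (hqd : q.natDegree = B) :
    res (C a * p + C b * q) (C b * p + C a * q) = (a ^ 2 - b ^ 2) ^ B * res p q := by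
  by_cases hb : b = 0
  · have ha : a = 1 := by simpa [hb] using hab
    simp [res, ha, hb]
  · obtain ⟨hPm, hPd⟩ := comb_monic B a b hab p q hpm hpd hqm hqd
    set P := C a * p + C b * q with hP
    have hPc : Multiset.card P.roots = B := by rw [card_roots_of_monic hPm, hPd]
    have hpcard : Multiset.card p.roots = B := by rw [card_roots_of_monic hpm, hpd]
    have step1 : ∀ z ∈ P.roots, (C b * p + C a * q).eval z
        = ((b ^ 2 - a ^ 2) / b) * p.eval z := by
      intro z hz
      have h0 : P.eval z = 0 := (isRoot_of_mem_roots hz)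
      rw [hP] at h0
      simp only [eval_add, eval_mul, eval_C] at h0 ⊢
      rw [div_mul_eq_mul_div, eq_div_iff hb]
      linear_combination a * h0
    have step2 : ∀ z ∈ p.roots, P.eval z = b * q.eval z := by
      intro z hz
      have h0 : p.eval z = 0 := isRoot_of_mem_roots hz
      rw [hP]; simp [h0]
    have e1 : res P (C b * p + C a * q) = ((b ^ 2 - a ^ 2) / b) ^ B * res P p := by
      rw [res_congr_mul step1, hPc]
    have e2 : res P p = (-1 : ℂ) ^ (B * B) * res p P := by
      rw [res_swap hPm hpm, hPd, hpd]
    have e3 : res p P = b ^ B * res p q := by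
      rw [res_congr_mul step2, hpcard]
    have hpar : ((-1 : ℂ)) ^ (B * B) = (-1) ^ B := by
      rcases Nat.even_or_odd B with h | h
      · rw [h.neg_one_pow, (h.mul_left B).neg_one_pow]
      · rw [(h.mul h).neg_one_pow, h.neg_one_pow]
    rw [e1, e2, e3, hpar]
    have hbB : (b : ℂ) ^ B ≠ 0 := pow_ne_zero _ hb
    have hdb : ((b ^ 2 - a ^ 2) / b) ^ B * b ^ B = (b ^ 2 - a ^ 2) ^ B := by
      rw [div_pow, div_mul_cancel₀ _ hbB]
    rw [show (a ^ 2 - b ^ 2) = (-1) * (b ^ 2 - a ^ 2) by ring, mul_pow, ← hdb]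
    ring

lemma iso_ab (t : ℝ) :
    exp (-(I * π * t)) * (Real.cos (π * t) : ℂ)
      + exp (-(I * π * t)) * (I * (Real.sin (π * t) : ℂ)) = 1 := by
  have h1 : (Real.cos (π * t) : ℂ) + I * (Real.sin (π * t) : ℂ)
      = exp ((π * t : ℝ) * I) := by
    rw [Complex.exp_mul_I, ← Complex.ofReal_cos, ← Complex.ofReal_sin]; ring
  rw [← mul_add, h1, ← Complex.exp_add,
    show -(I * (π : ℂ) * t) + ((π * t : ℝ) : ℂ) * I = 0 by push_cast; ring,
    Complex.exp_zero]

lemma iso_sq (t : ℝ) :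
    (exp (-(I * π * t)) * (Real.cos (π * t) : ℂ)) ^ 2
      - (exp (-(I * π * t)) * (I * (Real.sin (π * t) : ℂ))) ^ 2
      = exp (-(2 * π * I * t)) := by
  have hcs : (Real.cos (π * t) : ℂ) ^ 2 + (Real.sin (π * t) : ℂ) ^ 2 = 1 := by
    norm_cast
    exact Real.cos_sq_add_sin_sq _
  have h2 : exp (-(2 * (π:ℂ) * I * t)) = exp (-(I * (π:ℂ) * t)) ^ 2 := by
    rw [show -(2 * (π:ℂ) * I * t) = (2:ℕ) * (-(I * (π:ℂ) * t)) by push_cast; ring,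
      Complex.exp_nat_mul]
  rw [h2]
  linear_combination exp (-(I * (π:ℂ) * t)) ^ 2 * hcs
    - exp (-(I * (π:ℂ) * t)) ^ 2 * ((Real.sin (π * t) : ℂ)) ^ 2 * Complex.I_sq

lemma isoNum_eq (p q : Polynomial ℂ) (t : ℝ) :
    isoNum p q t = C (exp (-(I * π * t)) * (Real.cos (π * t) : ℂ)) * p
      + C (exp (-(I * π * t)) * (I * (Real.sin (π * t) : ℂ))) * q := by
  unfold isoNum
  rw [mul_add, ← mul_assoc, ← mul_assoc, ← C_mul, ← C_mul]

lemma isoDen_eq (p q : Polynomial ℂ) (t : ℝ) :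
    isoDen p q t = C (exp (-(I * π * t)) * (I * (Real.sin (π * t) : ℂ))) * p
      + C (exp (-(I * π * t)) * (Real.cos (π * t) : ℂ)) * q := by
  unfold isoDen
  rw [mul_add, ← mul_assoc, ← mul_assoc, ← C_mul, ← C_mul]

/-- For `(p,q) ∈ Rat_B`, the `2π` isorotation loop
`(p_t, q_t) = (e^{-iπt}(cos(πt) p + i sin(πt) q), e^{-iπt}(i sin(πt) p + cos(πt) q))`
stays in `Rat_B`, is a loop based at `(p,q)`, satisfies
`Res(p_t,q_t) = e^{-2πiBt}·Res(p,q)`, and along it the resultant winds exactly `-B`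
times around `0`. -/
theorem two_pi_isorotation_loop (B : ℕ) (hB : 1 ≤ B) (p q : Polynomial ℂ)
    (hpm : p.Monic) (hpd : p.natDegree = B) (hqm : q.Monic) (hqd : q.natDegree = B)
    (hnoroot : ∀ z : ℂ, ¬(p.eval z = 0 ∧ q.eval z = 0)) :
    (∀ t ∈ Set.Icc (0:ℝ) 1,
      (isoNum p q t).Monic ∧ (isoNum p q t).natDegree = B ∧
      (isoDen p q t).Monic ∧ (isoDen p q t).natDegree = B ∧
      (∀ z : ℂ, ¬((isoNum p q t).eval z = 0 ∧ (isoDen p q t).eval z = 0)) ∧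
      res (isoNum p q t) (isoDen p q t) = exp (-(2 * π * I * B * t)) * res p q) ∧
    (isoNum p q 0 = p ∧ isoDen p q 0 = q ∧ isoNum p q 1 = p ∧ isoDen p q 1 = q) ∧
    1 / (2 * π * I) *
        ∫ t in (0:ℝ)..1,
          deriv (fun s => res (isoNum p q s) (isoDen p q s)) t /
            res (isoNum p q t) (isoDen p q t)
      = -(B : ℂ) := by
  have hres : res p q ≠ 0 := by
    unfold res
    rw [Ne, Multiset.prod_eq_zero_iff]
    intro h
    obtain ⟨z, hz, hev⟩ := Multiset.mem_map.mp h
    exact hnoroot z ⟨(isRoot_of_mem_roots hz), hev⟩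
  have main : ∀ t : ℝ,
      (isoNum p q t).Monic ∧ (isoNum p q t).natDegree = B ∧
      (isoDen p q t).Monic ∧ (isoDen p q t).natDegree = B ∧
      (∀ z : ℂ, ¬((isoNum p q t).eval z = 0 ∧ (isoDen p q t).eval z = 0)) ∧
      res (isoNum p q t) (isoDen p q t) = exp (-(2 * π * I * B * t)) * res p q := by
    intro t
    have hab := iso_ab t
    have hab' : exp (-(I * π * t)) * (I * (Real.sin (π * t) : ℂ))
        + exp (-(I * π * t)) * (Real.cos (π * t) : ℂ) = 1 := by
      rw [add_comm]; exact hab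
    obtain ⟨hNm, hNd⟩ := (isoNum_eq p q t) ▸
      comb_monic B _ _ hab p q hpm hpd hqm hqd
    obtain ⟨hDm, hDd⟩ := (isoDen_eq p q t) ▸
      comb_monic B _ _ hab' p q hpm hpd hqm hqd
    refine ⟨hNm, hNd, hDm, hDd, ?_, ?_⟩
    · rintro z ⟨hz1, hz2⟩
      rw [isoNum_eq] at hz1
      rw [isoDen_eq] at hz2
      simp only [eval_add, eval_mul, eval_C] at hz1 hz2
      have he0 := Complex.exp_ne_zero (-(I * (π:ℂ) * t))
      have hcs : (Real.cos (π * t) : ℂ) ^ 2 + (Real.sin (π * t) : ℂ) ^ 2 = 1 := by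
        norm_cast
        exact Real.cos_sq_add_sin_sq _
      set c : ℂ := (Real.cos (π * t) : ℂ)
      set s : ℂ := (Real.sin (π * t) : ℂ)
      set u : ℂ := p.eval z
      set v : ℂ := q.eval z
      have h1 : c * u + I * s * v = 0 := by
        have h : exp (-(I * (π:ℂ) * t)) * (c * u + I * s * v) = 0 := by
          linear_combination hz1
        exact (mul_eq_zero.mp h).resolve_left he0
      have h2 : I * s * u + c * v = 0 := by
        have h : exp (-(I * (π:ℂ) * t)) * (I * s * u + c * v) = 0 := by
          linear_combination hz2
        exact (mul_eq_zero.mp h).resolve_left he0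
      refine hnoroot z ⟨?_, ?_⟩
      · show u = 0
        linear_combination c * h1 - I * s * h2 + s ^ 2 * u * Complex.I_sq - u * hcs
      · show v = 0
        linear_combination c * h2 - I * s * h1 + s ^ 2 * v * Complex.I_sq - v * hcs
    · rw [isoNum_eq, isoDen_eq, res_comb B _ _ hab p q hpm hpd hqm hqd, iso_sq]
      congr 1
      rw [show -(2 * (π:ℂ) * I * B * t) = (B:ℕ) * (-(2 * (π:ℂ) * I * t)) by push_cast; ring,
        Complex.exp_nat_mul]
  have hexp1 : exp (-(I * (π:ℂ))) = -1 := by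
    rw [show -(I * (π:ℂ)) = -((π:ℂ) * I) by ring, Complex.exp_neg, Complex.exp_pi_mul_I]
    norm_num
  refine ⟨fun t _ => main t, ⟨?_, ?_, ?_, ?_⟩, ?_⟩
  · simp [isoNum]
  · simp [isoDen]
  · simp [isoNum, hexp1, Real.sin_pi, Real.cos_pi]
  · simp [isoDen, hexp1, Real.sin_pi, Real.cos_pi]
  · set cc : ℂ := -(2 * π * I * B) with hcc
    have keyfun : ∀ t : ℝ, res (isoNum p q t) (isoDen p q t) = exp (cc * t) * res p q := by
      intro t
      rw [(main t).2.2.2.2.2]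
      congr 2
      rw [hcc]; push_cast; ring
    have hfun : (fun s : ℝ => res (isoNum p q s) (isoDen p q s))
        = fun s : ℝ => exp (cc * s) * res p q := funext keyfun
    have hderiv : ∀ t : ℝ, deriv (fun s : ℝ => exp (cc * s) * res p q) t
        = cc * exp (cc * t) * res p q := by
      intro t
      have h1 : HasDerivAt (fun s : ℝ => (s : ℂ)) 1 t := by
        simpa using (hasDerivAt_id t).ofReal_comp
      have h2 : HasDerivAt (fun s : ℝ => cc * (s : ℂ)) cc t := by simpa using h1.const_mul cc
      have h3 := h2.cexp.mul_const (res p q)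
      rw [h3.deriv]; ring
    have hint : (∫ t in (0:ℝ)..1,
          deriv (fun s => res (isoNum p q s) (isoDen p q s)) t /
            res (isoNum p q t) (isoDen p q t)) = ∫ _ in (0:ℝ)..1, cc := by
      apply intervalIntegral.integral_congr
      intro t _
      rw [hfun]
      show deriv (fun s : ℝ => exp (cc * s) * res p q) t /
          res (isoNum p q t) (isoDen p q t) = cc
      rw [hderiv, keyfun, mul_assoc, mul_div_assoc,
        div_self (mul_ne_zero (Complex.exp_ne_zero _) hres), mul_one]
    rw [hint, intervalIntegral.integral_const]
    simp only [sub_zero, one_smul]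
    have hπ : (π:ℂ) ≠ 0 := Complex.ofReal_ne_zero.mpr Real.pi_ne_zero
    rw [hcc]
    field_simp
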